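/- Let T be a grounded oriented tree with no leaf of in-degree 1 such that |U(T)| ≥ 2 and the minimal subtree T' of T containing U(T) is an out-arborescence. Then for sufficiently large k and ℓ, T is a subgraph of T(k,ℓ), where T(k,ℓ) is obtained from the complete ℓ-ary out-arborescence of depth k by identifying each leaf with the centre of a new copy of the (k−1)-subdivision of the in-star with ℓ leaves. -/

import Mathlib

/-- Out-degree of a vertex in a digraph given by a relation. -/
noncomputable def outDeg {V : Type*} (G : V → V → Prop) (v : V) : ℕ := Nat.card {u : V // G v u}

/-- In-degree of a vertex in a digraph given by a relation. -/
noncomputable def inDeg {V : Type*} (G : V → V → Prop) (v : V) : ℕ := Nat.card {u : V // G u v}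

/-- A digraph has no loops. -/
def Loopless {V : Type*} (G : V → V → Prop) : Prop := ∀ v, ¬ G v v
/-- An oriented tree: an orientation (at most one direction per pair) of a tree. -/
def IsOrientedTree {V : Type*} [Finite V] (T : V → V → Prop) : Prop :=
  (∀ u v, T u v → ¬ T v u) ∧ (SimpleGraph.fromRel T).IsTree

/-- A height function of an oriented tree. -/
def IsHeightFun {V : Type*} (T : V → V → Prop) (h : V → ℤ) : Prop :=
  ∀ u v, T u v → h v = h u + 1
/-- `T` is contained in `G` as a subgraph. -/
def ContainsSub {V W : Type*} (T : V → V → Prop) (G : W → W → Prop) : Prop :=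
  ∃ φ : V → W, Function.Injective φ ∧ ∀ u v, T u v → G (φ u) (φ v)
/-- An out-arborescence with root `r`. -/
def IsOutArb {V : Type*} [Finite V] (T : V → V → Prop) (r : V) : Prop :=
  IsOrientedTree T ∧ inDeg T r = 0 ∧ ∀ v, v ≠ r → inDeg T v = 1
/-- The set of vertices of in-degree at least 2. -/
def Uset {V : Type*} (T : V → V → Prop) : Set V := {v | 2 ≤ inDeg T v}

/-- `S` is the vertex set of the minimal subtree of `T` containing the set `U`. -/
def MinimalSubtree {V : Type*} (T : V → V → Prop) (U S : Set V) : Prop :=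
  U ⊆ S ∧ ((SimpleGraph.fromRel T).induce S).Connected ∧
    ∀ S' : Set V, U ⊆ S' → S' ⊆ S → ((SimpleGraph.fromRel T).induce S').Connected → S' = S
/-- Vertices of `T(k,ℓ)`: the complete `ℓ`-ary out-arborescence of depth `k`
(vertices: lists over `Fin ℓ` of length at most `k`) together with, for each leaf
(list of length `k`), `ℓ` rays of `k` internal vertices each, indexed by their
distance minus one from the centre. -/
def TVert (k ℓ : ℕ) : Type :=
  {l : List (Fin ℓ) // l.length ≤ k} ⊕ ({l : List (Fin ℓ) // l.length = k} × Fin ℓ × Fin k)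

/-- The edge relation of `T(k,ℓ)`: `B⁺_{k,ℓ}` with each leaf identified with the centre
of a new copy of `S⁻_{k,ℓ}` (rays directed towards the centre). -/
def TAdj (k ℓ : ℕ) : TVert k ℓ → TVert k ℓ → Prop
  | Sum.inl u, Sum.inl v => ∃ a : Fin ℓ, (v : List (Fin ℓ)) = u.1 ++ [a]
  | Sum.inr (l, r, p), Sum.inr (l', r', p') => l = l' ∧ r = r' ∧ (p : ℕ) = (p' : ℕ) + 1
  | Sum.inr (l, _, p), Sum.inl v => (p : ℕ) = 0 ∧ (v : List (Fin ℓ)) = l.1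
  | Sum.inl _, Sum.inr _ => False

section Helpers
set_option linter.unusedSectionVars false
variable {V : Type} [Finite V]

lemma indeg_unique {T : V → V → Prop} {v a b : V} (h : inDeg T v ≤ 1)
    (ha : T a v) (hb : T b v) : a = b := by
  have hs : Subsingleton {u : V // T u v} := Finite.card_le_one_iff_subsingleton.mp h
  exact congrArg Subtype.val (hs.elim ⟨a, ha⟩ ⟨b, hb⟩)

lemma two_le_indeg {T : V → V → Prop} {v a b : V} (hab : a ≠ b) (ha : T a v) (hb : T b v) :
    2 ≤ inDeg T v := by
  have : Nontrivial {u : V // T u v} := ⟨⟨⟨a, ha⟩, ⟨b, hb⟩, by simpa using hab⟩⟩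
  exact Finite.one_lt_card_iff_nontrivial.mpr this

lemma outdeg_zero {T : V → V → Prop} {v : V} (h : ∀ w, ¬ T v w) : outDeg T v = 0 := by
  have : IsEmpty {u : V // T v u} := ⟨fun u => h u u.2⟩
  simp [outDeg, Nat.card_eq_zero, this]

lemma no_in_of_indeg_zero {T : V → V → Prop} {v a : V} (h : inDeg T v = 0) (ha : T a v) : False := by
  rcases Nat.card_eq_zero.mp h with he | hi
  · exact he.elim ⟨a, ha⟩
  · haveI := hi; exact not_finite {u : V // T u v}

lemma induce_walk {W : Type*} (G : SimpleGraph W) (S : Set W) {a b : ↥S}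
    (p : (G.induce S).Walk a b) : ∃ q : G.Walk a b, ∀ y ∈ q.support, y ∈ S := by
  induction p with
  | @nil u =>
    refine ⟨SimpleGraph.Walk.nil, ?_⟩
    rintro y hy
    simp only [SimpleGraph.Walk.support_nil, List.mem_singleton] at hy
    exact hy ▸ u.2
  | @cons u c d hadj p ih =>
    obtain ⟨q, hq⟩ := ih
    have hadj' : G.Adj u c := hadj
    refine ⟨SimpleGraph.Walk.cons hadj' q, ?_⟩
    intro y hy
    rw [SimpleGraph.Walk.support_cons] at hy
    rcases List.mem_cons.mp hy with hy | hy
    · exact hy ▸ u.2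
    · exact hq y hy
end Helpers

/-- If `T` is grounded, has no leaf of in-degree 1, `|U(T)| ≥ 2`, and the minimal
subtree of `T` containing `U(T)` is an out-arborescence, then for all sufficiently
large `k` and `ℓ`, `T` is a subgraph of `T(k,ℓ)`. -/
theorem stmt8 {V : Type} [Finite V] (T : V → V → Prop) (hT : IsOrientedTree T)
    (hground : ∃ h : V → ℤ, IsHeightFun T h ∧
      ∀ u v, u ∈ Uset T → v ∈ Uset T → h u = h v)
    (hnoleaf : ∀ v, ¬ (inDeg T v = 1 ∧ outDeg T v = 0))
    (S : Set V) (hmin : MinimalSubtree T (Uset T) S)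
    (hU2 : 2 ≤ Nat.card (Uset T))
    (r : V) (hr : r ∈ S)
    (harb : IsOutArb (fun a b : S => T a b) ⟨r, hr⟩) :
    ∃ k₀ ℓ₀ : ℕ, ∀ k ≥ k₀, ∀ ℓ ≥ ℓ₀, ContainsSub T (TAdj k ℓ) := by
  classical
  obtain ⟨h, hh, hconst⟩ := hground
  obtain ⟨horient, htree⟩ := hT
  have hUnontriv : Nontrivial ↥(Uset T) := Finite.one_lt_card_iff_nontrivial.mp hU2
  obtain ⟨⟨u₁, hu₁⟩, ⟨u₂, hu₂⟩, hu12⟩ := hUnontriv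
  have hu12' : u₁ ≠ u₂ := fun e => hu12 (Subtype.ext e)
  set H := h u₁ with hHdef
  have hUh : ∀ u ∈ Uset T, h u = H := fun u hu => hconst u u₁ hu hu₁
  have hne : ∀ {a b : V}, T a b → a ≠ b := by
    intro a b hab heq
    have := hh a b hab
    subst heq
    omega
  have hadj : ∀ {a b : V}, T a b → (SimpleGraph.fromRel T).Adj a b := by
    intro a b hab
    rw [SimpleGraph.fromRel_adj]
    exact ⟨hne hab, Or.inl hab⟩
  have : Nontrivial V := ⟨u₁, u₂, hu12'⟩
  -- every vertex has a neighbour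
  have hnbr : ∀ v : V, ∃ w, T v w ∨ T w v := by
    intro v
    obtain ⟨w, hw⟩ := exists_ne v
    obtain ⟨p⟩ := htree.isConnected v w
    have hnn : ¬ p.Nil := SimpleGraph.Walk.not_nil_of_ne hw.symm
    have hA := (p.firstDart hnn).adj
    rw [SimpleGraph.fromRel_adj] at hA
    exact ⟨_, hA.2⟩
  -- maximal height vertex is in U; heights bounded by H
  have hmax : ∀ v : V, h v ≤ H := by
    obtain ⟨v₀, hv₀⟩ := Finite.exists_max h
    have hnoout : ∀ w, ¬ T v₀ w := by
      intro w hw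
      have h1 := hh v₀ w hw
      have h2 := hv₀ w
      omega
    have hv₀U : v₀ ∈ Uset T := by
      have hod : outDeg T v₀ = 0 := outdeg_zero hnoout
      have hid : inDeg T v₀ ≠ 1 := fun h1 => hnoleaf v₀ ⟨h1, hod⟩
      obtain ⟨w, hw⟩ := hnbr v₀
      rcases hw with hw | hw
      · exact absurd hw (hnoout w)
      · by_contra hU
        have hle : inDeg T v₀ ≤ 1 := by
          have : ¬ 2 ≤ inDeg T v₀ := hU
          omega
        interval_cases hdeg : inDeg T v₀
        · exact no_in_of_indeg_zero hdeg hw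
        · exact hid rfl
    intro v
    have := hv₀ v
    have := hUh v₀ hv₀U
    omega
  -- vertices of U are sinks
  have hUsink : ∀ u ∈ Uset T, ∀ w, ¬ T u w := by
    intro u hu w hw
    have h1 := hh u w hw
    have h2 := hUh u hu
    have h3 := hmax w
    omega
  have hUS : Uset T ⊆ S := hmin.1
  -- parent function on S
  have hpar0 : ∀ v : V, ∃ p : V, (v ∈ S ∧ v ≠ r) → p ∈ S ∧ T p v ∧ ∀ p' ∈ S, T p' v → p' = p := by
    intro v
    by_cases hv : v ∈ S ∧ v ≠ r
    · have hne' : (⟨v, hv.1⟩ : ↥S) ≠ ⟨r, hr⟩ := fun e => hv.2 (congrArg Subtype.val e)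
      have h1 : inDeg (fun a b : ↥S => T a b) ⟨v, hv.1⟩ = 1 := harb.2.2 _ hne'
      obtain ⟨hsub, hne2⟩ := Nat.card_eq_one_iff_unique.mp h1
      obtain ⟨⟨p, hp⟩⟩ := hne2
      refine ⟨(p : V), fun _ => ⟨p.2, hp, ?_⟩⟩
      intro p' hp'S hp'T
      have heq := hsub.elim ⟨⟨p', hp'S⟩, hp'T⟩ ⟨p, hp⟩
      exact congrArg (fun x => ((x : ↥S) : V)) (congrArg Subtype.val heq)
    · exact ⟨v, fun hc => absurd hc hv⟩
  choose par hpar using hpar0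
  -- r is the unique height-minimiser on S
  have hSle : ∀ v ∈ S, h r ≤ h v := by
    haveI : Nonempty ↥S := ⟨⟨r, hr⟩⟩
    obtain ⟨v₀, hv₀⟩ := Finite.exists_max (fun v : ↥S => -h (v : V))
    have : (v₀ : V) = r := by
      by_contra hvr
      obtain ⟨hpS, hpT, -⟩ := hpar (v₀ : V) ⟨v₀.2, hvr⟩
      have h1 := hh _ _ hpT
      have h2 := hv₀ ⟨_, hpS⟩
      simp only at h2
      omega
    intro v hv
    have h2 := hv₀ ⟨v, hv⟩
    rw [this] at h2
    simp only at h2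
    omega
  have hSlt : ∀ v ∈ S, v ≠ r → h r < h v := by
    intro v hv hvr
    obtain ⟨hpS, hpT, -⟩ := hpar v ⟨hv, hvr⟩
    have h1 := hh _ _ hpT
    have h2 := hSle _ hpS
    omega
  -- r is not in U
  have hrU : r ∉ Uset T := by
    intro hrU
    have hur : u₁ ≠ r ∨ u₂ ≠ r := by
      rcases eq_or_ne u₁ r with h1 | h1
      · exact Or.inr (fun h2 => hu12' (h1.trans h2.symm))
      · exact Or.inl h1
    rcases hur with hur | hur
    · have := hSlt u₁ (hUS hu₁) hur
      have := hUh u₁ hu₁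
      have := hUh r hrU
      omega
    · have := hSlt u₂ (hUS hu₂) hur
      have := hUh u₂ hu₂
      have := hUh r hrU
      omega
  have hrH : h r < H := by
    have := hSlt u₁ (hUS hu₁) (fun e => by rw [e] at hu₁; exact hrU hu₁)
    have := hUh u₁ hu₁
    omega
  -- outside S: in-degree at most 1, at least one out-edge
  have hinle : ∀ v, v ∉ S → inDeg T v ≤ 1 := by
    intro v hv
    by_contra hc
    exact hv (hUS (by simpa [Uset] using Nat.le_of_not_lt (by omega : ¬ inDeg T v < 2)))
  have hout1 : ∀ v, v ∉ S → ∃ w, T v w := by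
    intro v hv
    by_contra hc
    push_neg at hc
    have hod : outDeg T v = 0 := outdeg_zero hc
    have hid : inDeg T v ≠ 1 := fun h1 => hnoleaf v ⟨h1, hod⟩
    have hle := hinle v hv
    obtain ⟨w, hw⟩ := hnbr v
    rcases hw with hw | hw
    · exact hc w hw
    · interval_cases hdeg : inDeg T v
      · exact no_in_of_indeg_zero hdeg hw
      · exact hid rfl
  -- walks within S
  have hSwalk : ∀ a b : V, a ∈ S → b ∈ S →
      ∃ q : (SimpleGraph.fromRel T).Walk a b, ∀ y ∈ q.support, y ∈ S := by
    intro a b ha hb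
    obtain ⟨p⟩ := hmin.2.1.preconnected ⟨a, ha⟩ ⟨b, hb⟩
    exact induce_walk _ _ p
  -- walks from any vertex into S, along increasing heights
  have hwalkS : ∀ v : V, ∃ s, s ∈ S ∧
      ∃ p : (SimpleGraph.fromRel T).Walk v s, ∀ y ∈ p.support, h v ≤ h y := by
    have AUX : ∀ n : ℕ, ∀ v : V, (H - h v).toNat ≤ n → ∃ s, s ∈ S ∧
        ∃ p : (SimpleGraph.fromRel T).Walk v s, ∀ y ∈ p.support, h v ≤ h y := by
      intro n
      induction n with
      | zero =>
        intro v hn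
        by_cases hv : v ∈ S
        · refine ⟨v, hv, SimpleGraph.Walk.nil, ?_⟩
          intro y hy
          simp only [SimpleGraph.Walk.support_nil, List.mem_singleton] at hy
          exact hy ▸ le_refl _
        · exfalso
          obtain ⟨w, hw⟩ := hout1 v hv
          have h1 := hh v w hw
          have h2 := hmax w
          omega
      | succ n ih =>
        intro v hn
        by_cases hv : v ∈ S
        · refine ⟨v, hv, SimpleGraph.Walk.nil, ?_⟩
          intro y hy
          simp only [SimpleGraph.Walk.support_nil, List.mem_singleton] at hy
          exact hy ▸ le_refl _
        · obtain ⟨w, hw⟩ := hout1 v hv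
          have h1 := hh v w hw
          have h2 := hmax w
          obtain ⟨s, hs, p, hp⟩ := ih w (by omega)
          refine ⟨s, hs, SimpleGraph.Walk.cons (hadj hw) p, ?_⟩
          intro y hy
          rw [SimpleGraph.Walk.support_cons] at hy
          rcases List.mem_cons.mp hy with hy | hy
          · exact hy ▸ le_refl _
          · have := hp y hy
            omega
    exact fun v => AUX (H - h v).toNat v le_rfl
  -- uniqueness of paths in the tree
  have hpathuniq : ∀ {a b : V} (p q : (SimpleGraph.fromRel T).Walk a b),
      p.IsPath → q.IsPath → p = q := by
    intro a b p q hp hq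
    have := SimpleGraph.isAcyclic_iff_path_unique.mp htree.IsAcyclic
      (⟨p, hp⟩ : (SimpleGraph.fromRel T).Path a b) ⟨q, hq⟩
    exact congrArg Subtype.val this
  -- outside S, the out-neighbour is unique
  have huniqout : ∀ v, v ∉ S → ∀ w₁ w₂, T v w₁ → T v w₂ → w₁ = w₂ := by
    intro v hv w₁ w₂ hw₁ hw₂
    by_contra hne12
    have hh₁ := hh v w₁ hw₁
    have hh₂ := hh v w₂ hw₂
    obtain ⟨s₁, hs₁, p₁, hp₁⟩ := hwalkS w₁
    obtain ⟨s₂, hs₂, p₂, hp₂⟩ := hwalkS w₂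
    obtain ⟨q, hq⟩ := hSwalk s₁ s₂ hs₁ hs₂
    set W : (SimpleGraph.fromRel T).Walk w₁ w₂ := p₁.append (q.append p₂.reverse) with hW
    have hvW : v ∉ W.support := by
      intro hmem
      rw [hW, SimpleGraph.Walk.support_append, SimpleGraph.Walk.support_append] at hmem
      rcases List.mem_append.mp hmem with hmem | hmem
      · have := hp₁ v hmem
        omega
      · rcases List.mem_append.mp (List.mem_of_mem_tail hmem) with hmem2 | hmem2
        · exact hv (hq v hmem2)
        · rw [SimpleGraph.Walk.support_reverse] at hmem2
          have := hp₂ v (List.mem_reverse.mp (List.mem_of_mem_tail hmem2))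
          omega
    have hP2 : (SimpleGraph.Walk.cons (hadj hw₁).symm
        (SimpleGraph.Walk.cons (hadj hw₂) SimpleGraph.Walk.nil)).IsPath := by
      rw [SimpleGraph.Walk.cons_isPath_iff]
      constructor
      · rw [SimpleGraph.Walk.cons_isPath_iff]
        refine ⟨SimpleGraph.Walk.IsPath.nil, ?_⟩
        simp only [SimpleGraph.Walk.support_nil, List.mem_singleton]
        exact fun e => (hne hw₂) e
      · simp only [SimpleGraph.Walk.support_cons, SimpleGraph.Walk.support_nil]
        intro hmem
        rcases List.mem_cons.mp hmem with hmem | hmem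
        · exact (hne hw₁) hmem.symm
        · simp only [List.mem_singleton] at hmem
          exact hne12 hmem
    have heq := hpathuniq _ _ hP2 W.bypass_isPath
    have : v ∈ W.bypass.support := by
      rw [← heq]
      simp [SimpleGraph.Walk.support_cons]
    exact hvW (W.support_bypass_subset this)
  -- the successor function outside S
  have hnext0 : ∀ v : V, ∃ w, v ∉ S → T v w :=
    fun v => if hv : v ∈ S then ⟨v, fun c => absurd hv c⟩
      else (hout1 v hv).imp (fun w hw _ => hw)
  choose next hnext using hnext0
  have hnextu : ∀ v, v ∉ S → ∀ w, T v w → w = next v :=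
    fun v hv w hw => huniqout v hv w (next v) hw (hnext v hv)
  -- iterating next eventually hits S
  have hhit : ∀ v : V, ∃ n : ℕ, next^[n] v ∈ S := by
    have AUX : ∀ n : ℕ, ∀ v : V, (H - h v).toNat ≤ n → ∃ mm : ℕ, next^[mm] v ∈ S := by
      intro n
      induction n with
      | zero =>
        intro v hn
        by_cases hv : v ∈ S
        · exact ⟨0, hv⟩
        · exfalso
          have h1 := hh v _ (hnext v hv)
          have h2 := hmax (next v)
          omega
      | succ n ih =>
        intro v hn
        by_cases hv : v ∈ S
        · exact ⟨0, hv⟩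
        · have h1 := hh v _ (hnext v hv)
          have h2 := hmax (next v)
          obtain ⟨mm, hmm⟩ := ih (next v) (by omega)
          exact ⟨mm + 1, by rwa [Function.iterate_succ_apply]⟩
    exact fun v => AUX (H - h v).toNat v le_rfl
  set m : V → ℕ := fun v => Nat.find (hhit v) with hmdef
  set ev : V → V := fun v => next^[m v] v with hevdef
  have heS : ∀ v, ev v ∈ S := fun v => Nat.find_spec (hhit v)
  have hnotS : ∀ v (i : ℕ), i < m v → next^[i] v ∉ S := fun v i hi => Nat.find_min (hhit v) hi
  have hstep : ∀ v (i : ℕ), i < m v → T (next^[i] v) (next^[i + 1] v) := by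
    intro v i hi
    have := hnext _ (hnotS v i hi)
    rwa [Function.iterate_succ_apply']
  have hhts : ∀ v (i : ℕ), i ≤ m v → h (next^[i] v) = h v + i := by
    intro v i
    induction i with
    | zero => intro _; simp
    | succ i ih =>
      intro hi
      have h1 := ih (by omega)
      have h2 := hh _ _ (hstep v i (by omega))
      push_cast
      omega
  have hm1 : ∀ v, v ∉ S → 1 ≤ m v := by
    intro v hv
    rcases Nat.eq_zero_or_pos (m v) with h0 | h1
    · exfalso
      have := heS v
      rw [hevdef] at this
      simp only at this
      rw [h0] at this
      exact hv this
    · exact h1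
  have hmcard : ∀ v, m v < Nat.card V := by
    intro v
    have hinj : Function.Injective (fun i : Fin (m v + 1) => next^[(i : ℕ)] v) := by
      intro i j hij
      have h1 := hhts v i (by omega)
      have h2 := hhts v j (by omega)
      have hij' : next^[(i : ℕ)] v = next^[(j : ℕ)] v := hij
      rw [hij'] at h1
      have : (i : ℕ) = (j : ℕ) := by omega
      exact Fin.ext this
    have := Nat.card_le_card_of_injective _ hinj
    simpa using this
  -- endpoints of routes are in U or equal to r
  have heUr : ∀ v, v ∉ S → (ev v ∈ Uset T ∨ ev v = r) := by
    intro v hv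
    by_contra hc
    push_neg at hc
    obtain ⟨heU, her⟩ := hc
    obtain ⟨hpS, hpT, -⟩ := hpar (ev v) ⟨heS v, her⟩
    have hm1' := hm1 v hv
    have hc1 : T (next^[m v - 1] v) (ev v) := by
      have := hstep v (m v - 1) (by omega)
      rwa [show m v - 1 + 1 = m v from by omega] at this
    have hcS : next^[m v - 1] v ∉ S := hnotS v _ (by omega)
    have hpc : par (ev v) ≠ next^[m v - 1] v := fun hEq => hcS (hEq ▸ hpS)
    exact heU (two_le_indeg hpc hpT hc1)
  -- the route as a walk
  have hRW : ∀ (q : ℕ) (v : V), (∀ i, i < q → T (next^[i] v) (next^[i + 1] v)) →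
      ∃ p : (SimpleGraph.fromRel T).Walk v (next^[q] v),
        p.support = (List.range (q + 1)).map (fun i => next^[i] v) := by
    intro q
    induction q with
    | zero => intro v _; exact ⟨SimpleGraph.Walk.nil, by simp⟩
    | succ q ih =>
      intro v hv
      obtain ⟨p, hp⟩ := ih (next v) (by
        intro i hi
        have := hv (i + 1) (by omega)
        rwa [Function.iterate_succ_apply, Function.iterate_succ_apply] at this)
      have hadj0 : (SimpleGraph.fromRel T).Adj v (next v) := hadj (by simpa using hv 0 (by omega))
      refine ⟨SimpleGraph.Walk.cons hadj0 (p.copy rfl (Function.iterate_succ_apply next q v).symm), ?_⟩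
      rw [SimpleGraph.Walk.support_cons, SimpleGraph.Walk.support_copy, hp]
      have key : List.map (fun i => next^[i] v) (List.range (q + 1 + 1)) =
          (fun i => next^[i] v) 0 :: List.map ((fun i => next^[i] v) ∘ Nat.succ)
            (List.range (q + 1)) := by
        rw [List.range_succ_eq_map, List.map_cons, List.map_map]
      rw [key]
      simp only [Function.iterate_zero, id_eq]
      congr 1
  -- there are no edges from S to the outside
  have hnoSout : ∀ u v, u ∈ S → v ∉ S → ¬ T u v := by
    intro u v huS hvS hT0
    obtain ⟨p, hp⟩ := hRW (m v) v (fun i hi => hstep v i hi)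
    have hPath1 : (SimpleGraph.Walk.cons (hadj hT0) p).IsPath := by
      rw [SimpleGraph.Walk.cons_isPath_iff]
      refine ⟨?_, ?_⟩
      · rw [SimpleGraph.Walk.isPath_def, hp]
        refine List.Nodup.map_on ?_ List.nodup_range
        intro i hi j hj hij
        rw [List.mem_range] at hi hj
        have h1 := hhts v i (by omega)
        have h2 := hhts v j (by omega)
        rw [hij] at h1
        omega
      · rw [hp]
        intro hmem
        obtain ⟨i, hi, hiu⟩ := List.mem_map.mp hmem
        rw [List.mem_range] at hi
        have h1 := hhts v i (by omega)
        have h2 := hh u v hT0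
        rw [hiu] at h1
        omega
    obtain ⟨q, hq⟩ := hSwalk u (ev v) huS (heS v)
    have heq := hpathuniq _ _ hPath1 q.bypass_isPath
    have hvmem : v ∈ q.bypass.support := by
      rw [← heq]
      rw [SimpleGraph.Walk.support_cons, hp]
      refine List.mem_cons.mpr (Or.inr ?_)
      exact List.mem_map.mpr ⟨0, by simp, by simp⟩
    exact hvS (hq v (q.support_bypass_subset hvmem))
  -- routes with equal length and equal last vertex coincide
  have hback : ∀ v w, v ∉ S → w ∉ S → m v = m w →
      next^[m v - 1] v = next^[m w - 1] w → v = w := by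
    intro v w hv hw hm he0
    have hm1v := hm1 v hv
    have AUX : ∀ j, j ≤ m v - 1 → next^[m v - 1 - j] v = next^[m v - 1 - j] w := by
      intro j
      induction j with
      | zero =>
        intro _
        simp only [Nat.sub_zero]
        rw [hm] at he0 ⊢
        exact he0
      | succ j ih =>
        intro hj
        have hprev := ih (by omega)
        have hpge : 1 ≤ m v - 1 - j := by omega
        set p := m v - 1 - j with hpdef
        have hmemS : next^[p] v ∉ S := hnotS v p (by omega)
        have hdeg : inDeg T (next^[p] v) ≤ 1 := hinle _ hmemS
        have e1 : T (next^[p - 1] v) (next^[p] v) := by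
          have := hstep v (p - 1) (by omega)
          rwa [show p - 1 + 1 = p from by omega] at this
        have e2 : T (next^[p - 1] w) (next^[p] w) := by
          have := hstep w (p - 1) (by omega)
          rwa [show p - 1 + 1 = p from by omega] at this
        rw [← hprev] at e2
        have hres := indeg_unique hdeg e1 e2
        rw [show m v - 1 - (j + 1) = p - 1 from by omega]
        exact hres
    have := AUX (m v - 1) le_rfl
    simpa using this
  -- in-degree of r is at most 1
  have hrdeg : inDeg T r ≤ 1 := by
    have : ¬ 2 ≤ inDeg T r := fun hc => hrU hc
    omega
  -- set the thresholds
  set d : ℕ := (H - h r).toNat with hddef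
  have hd1 : 1 ≤ d := by omega
  refine ⟨Nat.card V + d + 1, Nat.card V + d + 1, ?_⟩
  intro k hk ℓ hℓ
  have hcardV : 1 ≤ Nat.card V := Nat.card_pos
  have hℓpos : 0 < ℓ := by omega
  have hdk : d + Nat.card V < k := by omega
  set z : Fin ℓ := ⟨0, hℓpos⟩ with hzdef
  -- an injective labelling of V
  have hcardle : Nat.card V ≤ ℓ := by omega
  set lab : V → Fin ℓ := fun v => Fin.castLE hcardle ((Finite.equivFin V) v) with hlabdef
  have hlabinj : Function.Injective lab := by
    intro a b hab
    exact (Finite.equivFin V).injective (Fin.castLE_injective hcardle hab)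
  -- depth within S
  set dep : V → ℕ := fun v => (h v - h r).toNat with hdepdef
  have hdep_le : ∀ v, dep v ≤ d := by
    intro v
    have := hmax v
    simp only [hdepdef]
    omega
  have hdep_r : dep r = 0 := by simp [hdepdef]
  have hdep0 : ∀ v ∈ S, dep v = 0 → v = r := by
    intro v hv h0
    by_contra hvr
    have := hSlt v hv hvr
    simp only [hdepdef] at h0
    omega
  have hdepU : ∀ u ∈ Uset T, dep u = d := by
    intro u hu
    have := hUh u hu
    simp only [hdepdef]
    omega
  -- the address map on S
  set F : ℕ → V → List (Fin ℓ) := fun n => Nat.rec (motive := fun _ => V → List (Fin ℓ))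
    (fun _ => List.replicate (k - d) z) (fun _ ih v => ih (par v) ++ [lab v]) n with hFdef
  have hF0 : ∀ v, F 0 v = List.replicate (k - d) z := fun _ => rfl
  have hFs : ∀ n v, F (n + 1) v = F n (par v) ++ [lab v] := fun _ _ => rfl
  have hFlen : ∀ n v, (F n v).length = (k - d) + n := by
    intro n
    induction n with
    | zero => intro v; simp [hF0]
    | succ n ih => intro v; rw [hFs, List.length_append, ih]; simp; omega
  set ψ : V → List (Fin ℓ) := fun v => F (dep v) v with hψdef
  have hψr : ψ r = List.replicate (k - d) z := by
    simp only [hψdef, hdep_r, hF0]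
  have hdep_par : ∀ v ∈ S, v ≠ r → dep v = dep (par v) + 1 := by
    intro v hv hvr
    obtain ⟨hpS, hpT, -⟩ := hpar v ⟨hv, hvr⟩
    have h1 := hh _ _ hpT
    have h2 := hSle _ hpS
    simp only [hdepdef]
    omega
  have hψs : ∀ v ∈ S, v ≠ r → ψ v = ψ (par v) ++ [lab v] := by
    intro v hv hvr
    simp only [hψdef]
    rw [hdep_par v hv hvr, hFs]
  have hψlen : ∀ v, (ψ v).length = (k - d) + dep v := fun v => hFlen _ _
  have hψinj : ∀ v ∈ S, ∀ w ∈ S, ψ v = ψ w → v = w := by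
    intro v hv w hw hvw
    have hlen : dep v = dep w := by
      have := congrArg List.length hvw
      rw [hψlen, hψlen] at this
      omega
    by_cases hvr : v = r
    · subst hvr
      exact (hdep0 w hw (by rw [← hlen, hdep_r])).symm
    · by_cases hwr : w = r
      · subst hwr
        exact absurd (hdep0 v hv (by rw [hlen, hdep_r])) hvr
      · rw [hψs v hv hvr, hψs w hw hwr] at hvw
        obtain ⟨-, h2⟩ := List.append_inj' hvw (by simp)
        exact hlabinj (List.singleton_injective h2)
  -- length side conditions
  have hlen1 : ∀ v, v ∈ S → (ψ v).length ≤ k := by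
    intro v hv
    rw [hψlen]
    have := hdep_le v
    omega
  have hlen2 : ∀ v, ev v ∈ Uset T → (ψ (ev v)).length = k := by
    intro v hu
    rw [hψlen, hdepU _ hu]
    omega
  have hlen3 : ∀ v : V, m v - 1 < k := by
    intro v
    have := hmcard v
    omega
  have hlen4 : ∀ v : V, (List.replicate (k - d - m v) z).length ≤ k := by
    intro v
    rw [List.length_replicate]
    omega
  set φ : V → TVert k ℓ := fun v =>
    if hv : v ∈ S then Sum.inl ⟨ψ v, hlen1 v hv⟩
    else if hu : ev v ∈ Uset T then
      Sum.inr (⟨ψ (ev v), hlen2 v hu⟩, lab (next^[m v - 1] v), ⟨m v - 1, hlen3 v⟩)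
    else Sum.inl ⟨List.replicate (k - d - m v) z, hlen4 v⟩ with hφdef
  have hφ1 : ∀ v, ∀ hv : v ∈ S, φ v = Sum.inl ⟨ψ v, hlen1 v hv⟩ := by
    intro v hv
    simp only [hφdef]
    exact dif_pos hv
  have hφ2 : ∀ v, v ∉ S → ∀ hu : ev v ∈ Uset T,
      φ v = Sum.inr (⟨ψ (ev v), hlen2 v hu⟩, lab (next^[m v - 1] v), ⟨m v - 1, hlen3 v⟩) := by
    intro v hv hu
    simp only [hφdef]
    exact (dif_neg hv).trans (dif_pos hu)
  have hφ3 : ∀ v, v ∉ S → ev v ∉ Uset T →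
      φ v = Sum.inl ⟨List.replicate (k - d - m v) z, hlen4 v⟩ := by
    intro v hv hu
    simp only [hφdef]
    exact (dif_neg hv).trans (dif_neg hu)
  refine ⟨φ, ?_, ?_⟩
  · -- injectivity
    intro a b hab
    by_cases ha : a ∈ S <;> by_cases hb : b ∈ S
    · rw [hφ1 a ha, hφ1 b hb] at hab
      exact hψinj a ha b hb (congrArg Subtype.val (Sum.inl.inj hab))
    · exfalso
      by_cases hbu : ev b ∈ Uset T
      · rw [hφ1 a ha, hφ2 b hb hbu] at hab
        simp at hab
      · rw [hφ1 a ha, hφ3 b hb hbu] at hab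
        have hlen := congrArg List.length (congrArg Subtype.val (Sum.inl.inj hab))
        rw [hψlen, List.length_replicate] at hlen
        have := hm1 b hb
        have := hmcard b
        omega
    · exfalso
      by_cases hau : ev a ∈ Uset T
      · rw [hφ2 a ha hau, hφ1 b hb] at hab
        simp at hab
      · rw [hφ3 a ha hau, hφ1 b hb] at hab
        have hlen := congrArg List.length (congrArg Subtype.val (Sum.inl.inj hab))
        rw [hψlen, List.length_replicate] at hlen
        have := hm1 a ha
        have := hmcard a
        omega
    · by_cases hau : ev a ∈ Uset T <;> by_cases hbu : ev b ∈ Uset T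
      · rw [hφ2 a ha hau, hφ2 b hb hbu] at hab
        have h0 := Sum.inr.inj hab
        rw [Prod.mk.injEq, Prod.mk.injEq] at h0
        obtain ⟨h1, h2, h3⟩ := h0
        have hval : m a - 1 = m b - 1 := congrArg Fin.val h3
        have hma := hm1 a ha
        have hmb := hm1 b hb
        have hmab : m a = m b := by omega
        have hc : next^[m a - 1] a = next^[m b - 1] b := hlabinj h2
        exact hback a b ha hb hmab hc
      · exfalso
        rw [hφ2 a ha hau, hφ3 b hb hbu] at hab
        simp at hab
      · exfalso
        rw [hφ3 a ha hau, hφ2 b hb hbu] at hab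
        simp at hab
      · rw [hφ3 a ha hau, hφ3 b hb hbu] at hab
        have hlen := congrArg List.length (congrArg Subtype.val (Sum.inl.inj hab))
        rw [List.length_replicate, List.length_replicate] at hlen
        have hma := hm1 a ha
        have hmb := hm1 b hb
        have hca := hmcard a
        have hcb := hmcard b
        have hmab : m a = m b := by omega
        have hevb : ev b = r := (heUr b hb).resolve_left hbu
        have heva : ev a = r := (heUr a ha).resolve_left hau
        have e1 : T (next^[m a - 1] a) r := by
          have := hstep a (m a - 1) (by omega)
          rw [show m a - 1 + 1 = m a from by omega] at this
          rwa [show next^[m a] a = r from heva] at this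
        have e2 : T (next^[m b - 1] b) r := by
          have := hstep b (m b - 1) (by omega)
          rw [show m b - 1 + 1 = m b from by omega] at this
          rwa [show next^[m b] b = r from hevb] at this
        exact hback a b ha hb hmab (indeg_unique hrdeg e1 e2)
  · -- edge preservation
    intro a b hTab
    by_cases ha : a ∈ S <;> by_cases hb : b ∈ S
    · -- both in S : arborescence edge
      have hbr : b ≠ r := by
        intro hbr
        subst hbr
        exact no_in_of_indeg_zero (T := fun a b : ↥S => T a b) harb.2.1
          (a := ⟨a, ha⟩) hTab
      obtain ⟨hpS, hpT, hu⟩ := hpar b ⟨hb, hbr⟩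
      have hpareq : a = par b := hu a ha hTab
      rw [hφ1 a ha, hφ1 b hb]
      exact ⟨lab b, by
        show ψ b = ψ a ++ [lab b]
        rw [hψs b hb hbr, ← hpareq]⟩
    · exact absurd hTab (hnoSout a b ha hb)
    · -- entering S
      have hba : b = next a := hnextu a ha b hTab
      have hma1 : m a = 1 := by
        have hle : m a ≤ 1 := Nat.find_min' (hhit a) (by
          show next^[1] a ∈ S
          simpa [← hba] using hb)
        have := hm1 a ha
        omega
      have heva : ev a = b := by
        show next^[m a] a = b
        rw [hma1]
        simp [hba]
      rcases heUr a ha with hu | her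
      · rw [hφ2 a ha hu, hφ1 b hb]
        refine ⟨by simp [hma1], ?_⟩
        show ψ b = ψ (ev a)
        rw [heva]
      · have hbru : b = r := by rw [← heva, her]
        have hnotU : ev a ∉ Uset T := by rw [her]; exact hrU
        rw [hφ3 a ha hnotU, hφ1 b hb]
        refine ⟨z, ?_⟩
        show ψ b = List.replicate (k - d - m a) z ++ [z]
        rw [hbru, hψr, ← List.replicate_succ']
        congr 1
        have := hmcard a
        omega
    · -- both outside S : route edge
      have hba : b = next a := hnextu a ha b hTab
      subst hba
      have hmna1 := hm1 _ hb
      have hma1 := hm1 a ha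
      have hma2 : m a = m (next a) + 1 := by
        have hle1 : m (next a) ≤ m a - 1 := Nat.find_min' (hhit (next a)) (by
          show next^[m a - 1] (next a) ∈ S
          rw [← Function.iterate_succ_apply, Nat.succ_eq_add_one,
            show m a - 1 + 1 = m a from by omega]
          exact heS a)
        have hle2 : m a ≤ m (next a) + 1 := Nat.find_min' (hhit a) (by
          show next^[m (next a) + 1] a ∈ S
          rw [Function.iterate_succ_apply]
          exact heS (next a))
        omega
      have hev : ev (next a) = ev a := by
        show next^[m (next a)] (next a) = next^[m a] a
        rw [hma2, Function.iterate_succ_apply]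
      have hcc : next^[m (next a) - 1] (next a) = next^[m a - 1] a := by
        rw [← Function.iterate_succ_apply, Nat.succ_eq_add_one,
          show m (next a) - 1 + 1 = m a - 1 from by omega]
      rcases heUr a ha with hu | her
      · have hu' : ev (next a) ∈ Uset T := by rw [hev]; exact hu
        rw [hφ2 a ha hu, hφ2 (next a) hb hu']
        refine ⟨Subtype.ext ?_, ?_, ?_⟩
        · show ψ (ev a) = ψ (ev (next a))
          rw [hev]
        · exact congrArg lab hcc.symm
        · show m a - 1 = (m (next a) - 1) + 1
          omega
      · have her' : ev (next a) ∉ Uset T := by rw [hev, her]; exact hrU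
        have hera : ev a ∉ Uset T := by rw [her]; exact hrU
        rw [hφ3 a ha hera, hφ3 (next a) hb her']
        refine ⟨z, ?_⟩
        show List.replicate (k - d - m (next a)) z = List.replicate (k - d - m a) z ++ [z]
        rw [← List.replicate_succ']
        congr 1
        have := hmcard a
        omega
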